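/- (Unique global minimizer of the on-policy loss) For a full-support policy π define L(π) = (1/2)·Σ_x ρ(x)·Var_{y∼π(·|x)}(R^π_β(x,·)). Then L(π) ≥ 0 for all full-support π, L(π*) = 0, and if L(π) = 0 for a full-support policy π, then π(·|x) = π*(·|x) for every x with ρ(x) > 0. -/

import Mathlib

open Finset

noncomputable section

/-- The optimal regularized policy `π*`. -/
def piStar {X Y : Type*} [Fintype Y] (πref r : X → Y → ℝ) (β : ℝ) (x : X) (y : Y) : ℝ :=
  πref x y * Real.exp (r x y / β) / ∑ y', πref x y' * Real.exp (r x y' / β)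

/-- The regularized reward `R^π_β(x,y)`. -/
def Rreg {X Y : Type*} (πref r : X → Y → ℝ) (β : ℝ) (π : X → Y → ℝ) (x : X) (y : Y) : ℝ :=
  r x y - β * Real.log (π x y / πref x y)

/-- Variance of `f` under the distribution `μ` on a finite type. -/
def Var {Y : Type*} [Fintype Y] (μ : Y → ℝ) (f : Y → ℝ) : ℝ :=
  ∑ y, μ y * (f y - ∑ y', μ y' * f y') ^ 2

/-- On-policy loss `L(π)`. -/
def Lon {X Y : Type*} [Fintype X] [Fintype Y] (ρ : X → ℝ) (πref r : X → Y → ℝ) (β : ℝ)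
    (π : X → Y → ℝ) : ℝ :=
  (1 / 2) * ∑ x, ρ x * Var (π x) (Rreg πref r β π x)

/-- `π*` is the unique global minimizer of the on-policy loss. -/
theorem on_policy_loss_unique_global_minimizer
    {X Y : Type*} [Fintype X] [Fintype Y] [Nonempty X] [Nonempty Y]
    (πref : X → Y → ℝ) (href_pos : ∀ x y, 0 < πref x y)
    (href_sum : ∀ x, ∑ y, πref x y = 1)
    (r : X → Y → ℝ) (β : ℝ) (hβ : 0 < β)
    (ρ : X → ℝ) (hρ_nonneg : ∀ x, 0 ≤ ρ x) (hρ_sum : ∑ x, ρ x = 1) :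
    (∀ π : X → Y → ℝ, (∀ x y, 0 < π x y) → (∀ x, ∑ y, π x y = 1) →
        0 ≤ Lon ρ πref r β π) ∧
    Lon ρ πref r β (piStar πref r β) = 0 ∧
    (∀ π : X → Y → ℝ, (∀ x y, 0 < π x y) → (∀ x, ∑ y, π x y = 1) →
        Lon ρ πref r β π = 0 →
        ∀ x, 0 < ρ x → ∀ y, π x y = piStar πref r β x y) := by
  have hZ : ∀ x, 0 < ∑ y', πref x y' * Real.exp (r x y' / β) := fun x =>
    Finset.sum_pos (fun y _ => mul_pos (href_pos x y) (Real.exp_pos _)) univ_nonempty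
  have hvar_nonneg : ∀ (μ f : Y → ℝ), (∀ y, 0 ≤ μ y) → 0 ≤ Var μ f := fun μ f h =>
    Finset.sum_nonneg fun y _ => mul_nonneg (h y) (sq_nonneg _)
  have hLon_nonneg : ∀ π : X → Y → ℝ, (∀ x y, 0 < π x y) → 0 ≤ Lon ρ πref r β π := by
    intro π hpos
    exact mul_nonneg (by norm_num)
      (Finset.sum_nonneg fun x _ => mul_nonneg (hρ_nonneg x)
        (hvar_nonneg _ _ fun y => (hpos x y).le))
  have hvar_const : ∀ (μ f : Y → ℝ) (c : ℝ), (∑ y, μ y) = 1 → (∀ y, f y = c) →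
      Var μ f = 0 := by
    intro μ f c hsum hc
    have : ∑ y', μ y' * f y' = c := by
      simp only [hc, ← Finset.sum_mul, hsum, one_mul]
    unfold Var
    rw [this]
    exact Finset.sum_eq_zero fun y _ => by rw [hc]; ring
  have hstar_sum : ∀ x, ∑ y, piStar πref r β x y = 1 := by
    intro x
    unfold piStar
    rw [← Finset.sum_div, div_self (hZ x).ne']
  have hstar_const : ∀ x y, Rreg πref r β (piStar πref r β) x y
      = β * Real.log (∑ y', πref x y' * Real.exp (r x y' / β)) := by
    intro x y
    unfold Rreg piStar
    have h1 : πref x y * Real.exp (r x y / β) / (∑ y', πref x y' * Real.exp (r x y' / β))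
        / πref x y = Real.exp (r x y / β) / (∑ y', πref x y' * Real.exp (r x y' / β)) := by
      rw [div_right_comm, mul_comm (πref x y), mul_div_assoc, div_self (href_pos x y).ne',
        mul_one]
    rw [h1, Real.log_div (Real.exp_pos _).ne' (hZ x).ne', Real.log_exp]
    field_simp
    ring
  refine ⟨fun π hpos _ => hLon_nonneg π hpos, ?_, ?_⟩
  · unfold Lon
    rw [mul_eq_zero]
    right
    exact Finset.sum_eq_zero fun x _ => by
      rw [hvar_const _ _ _ (hstar_sum x) (hstar_const x), mul_zero]
  · intro π hpos hsum hL x hρx y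
    -- each summand is zero
    have hterm : ∀ x ∈ Finset.univ, (0:ℝ) ≤ ρ x * Var (π x) (Rreg πref r β π x) :=
      fun x _ => mul_nonneg (hρ_nonneg x) (hvar_nonneg _ _ fun y => (hpos x y).le)
    have hsum0 : ∑ x, ρ x * Var (π x) (Rreg πref r β π x) = 0 := by
      have : Lon ρ πref r β π = (1/2) * ∑ x, ρ x * Var (π x) (Rreg πref r β π x) := rfl
      rw [this] at hL
      linarith [hL]
    have hx0 : ρ x * Var (π x) (Rreg πref r β π x) = 0 :=
      (Finset.sum_eq_zero_iff_of_nonneg hterm).mp hsum0 x (Finset.mem_univ x)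
    have hvar0 : Var (π x) (Rreg πref r β π x) = 0 := by
      rcases mul_eq_zero.mp hx0 with h | h
      · exact absurd h hρx.ne'
      · exact h
    set m := ∑ y', π x y' * Rreg πref r β π x y' with hm
    have hfy : ∀ y, Rreg πref r β π x y = m := by
      intro y
      have h1 : ∀ z ∈ Finset.univ, (0:ℝ) ≤ π x z * (Rreg πref r β π x z - m) ^ 2 :=
        fun z _ => mul_nonneg (hpos x z).le (sq_nonneg _)
      have h2 := (Finset.sum_eq_zero_iff_of_nonneg h1).mp hvar0 y (Finset.mem_univ y)
      rcases mul_eq_zero.mp h2 with h | h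
      · exact absurd h (hpos x y).ne'
      · have := pow_eq_zero_iff (n := 2) (by norm_num) |>.mp h
        linarith
    -- π x y = πref x y * exp(r x y / β) * exp(-m/β)
    have hpi : ∀ y, π x y = πref x y * Real.exp (r x y / β) * Real.exp (-m / β) := by
      intro y
      have h := hfy y
      unfold Rreg at h
      have hlog : Real.log (π x y / πref x y) = (r x y - m) / β := by
        rw [eq_div_iff hβ.ne']
        linear_combination -h
      have := congrArg Real.exp hlog
      rw [Real.exp_log (div_pos (hpos x y) (href_pos x y))] at this
      have h2 : π x y = πref x y * Real.exp ((r x y - m) / β) := by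
        rw [← this, mul_comm, div_mul_cancel₀ _ (href_pos x y).ne']
      rw [h2, sub_div, Real.exp_sub, div_eq_mul_inv, ← Real.exp_neg, neg_div, mul_assoc]
    have hexpm : Real.exp (-m / β) * (∑ y', πref x y' * Real.exp (r x y' / β)) = 1 := by
      have := hsum x
      calc Real.exp (-m / β) * (∑ y', πref x y' * Real.exp (r x y' / β))
          = ∑ y', πref x y' * Real.exp (r x y' / β) * Real.exp (-m / β) := by
            rw [Finset.mul_sum]; exact Finset.sum_congr rfl fun y' _ => by ring
        _ = ∑ y', π x y' := Finset.sum_congr rfl fun y' _ => (hpi y').symm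
        _ = 1 := hsum x
    have : Real.exp (-m / β) = 1 / (∑ y', πref x y' * Real.exp (r x y' / β)) := by
      rw [eq_div_iff (hZ x).ne']
      exact hexpm
    rw [hpi y, this]
    unfold piStar
    field_simp
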